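/- For every fixed σ > 0 and x ∈ ℝ, the hyperbolic density with shape η and scale ρ² = η σ² converges pointwise to the Laplace density with scale σ as η tends to 0 from the right: lim_{η → 0⁺} (2 √(η · η σ²) K₁(η))^(−1) exp(−√(η (η + x²/(η σ²)))) = (2σ)^(−1) exp(−|x|/σ). -/

import Mathlib

open MeasureTheory Real Filter

/-- The modified Bessel function of the second kind of order `ν`, for `z > 0`. -/
noncomputable def besselK (ν z : ℝ) : ℝ :=
  ∫ t in Set.Ioi (0 : ℝ), Real.exp (-z * Real.cosh t) * Real.cosh (ν * t)

/-- Auxiliary: `F η = ∫₀^∞ exp(-√(η² + v²)) dv`. -/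
noncomputable def besselAuxF (η : ℝ) : ℝ :=
  ∫ v in Set.Ioi (0 : ℝ), Real.exp (-Real.sqrt (η ^ 2 + v ^ 2))

lemma sinh_image_Ioi : Real.sinh '' Set.Ioi 0 = Set.Ioi 0 := by
  ext v
  constructor
  · rintro ⟨t, ht, rfl⟩
    exact Real.sinh_pos_iff.mpr ht
  · intro hv
    exact ⟨Real.arsinh v, Real.arsinh_pos_iff.mpr hv, Real.sinh_arsinh v⟩

lemma besselK_one_eq (η : ℝ) (hη : 0 < η) :
    besselK 1 η = ∫ u in Set.Ioi (0 : ℝ), Real.exp (-η * Real.sqrt (1 + u ^ 2)) := by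
  have hderiv : ∀ t ∈ Set.Ioi (0 : ℝ),
      HasDerivWithinAt Real.sinh (Real.cosh t) (Set.Ioi 0) t :=
    fun t _ => (Real.hasDerivAt_sinh t).hasDerivWithinAt
  have h := integral_image_eq_integral_abs_deriv_smul measurableSet_Ioi hderiv
    (Real.sinh_injective.injOn) (fun u => Real.exp (-η * Real.sqrt (1 + u ^ 2)))
  rw [sinh_image_Ioi] at h
  rw [h, besselK]
  refine setIntegral_congr_fun measurableSet_Ioi (fun t _ => ?_)
  have h1 : Real.sqrt (1 + Real.sinh t ^ 2) = Real.cosh t := by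
    rw [show (1 : ℝ) + Real.sinh t ^ 2 = Real.cosh t ^ 2 by rw [Real.cosh_sq]; ring]
    exact Real.sqrt_sq (Real.cosh_pos t).le
  simp only [smul_eq_mul, h1, abs_of_pos (Real.cosh_pos t), one_mul]
  ring

lemma besselAuxF_eq (η : ℝ) (hη : 0 < η) : besselAuxF η = η * besselK 1 η := by
  have h := integral_comp_mul_left_Ioi
    (fun v => Real.exp (-Real.sqrt (η ^ 2 + v ^ 2))) 0 hη
  rw [mul_zero] at h
  have h2 : ∀ u : ℝ, Real.exp (-Real.sqrt (η ^ 2 + (η * u) ^ 2))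
      = Real.exp (-η * Real.sqrt (1 + u ^ 2)) := by
    intro u
    congr 1
    rw [show η ^ 2 + (η * u) ^ 2 = η ^ 2 * (1 + u ^ 2) by ring, Real.sqrt_mul (sq_nonneg η),
      Real.sqrt_sq hη.le]
    ring
  simp only [h2] at h
  rw [besselK_one_eq η hη, besselAuxF, h, smul_eq_mul, ← mul_assoc,
    mul_inv_cancel₀ hη.ne', one_mul]

lemma besselAuxF_tendsto :
    Tendsto besselAuxF (nhdsWithin 0 (Set.Ioi 0)) (nhds 1) := by
  have hint : (∫ v in Set.Ioi (0 : ℝ), Real.exp (-v)) = 1 := by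
    rw [integral_exp_neg_Ioi]; simp
  have := MeasureTheory.tendsto_integral_filter_of_dominated_convergence
    (μ := volume.restrict (Set.Ioi (0 : ℝ)))
    (l := nhdsWithin (0 : ℝ) (Set.Ioi 0))
    (F := fun η v => Real.exp (-Real.sqrt (η ^ 2 + v ^ 2)))
    (f := fun v => Real.exp (-v))
    (bound := fun v => Real.exp (-v))
    (Eventually.of_forall fun η => by
      apply Continuous.aestronglyMeasurable
      continuity)
    (Eventually.of_forall fun η => by
      filter_upwards [ae_restrict_mem measurableSet_Ioi] with v hv
      rw [Real.norm_eq_abs, abs_of_pos (Real.exp_pos _), Real.exp_le_exp,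
        neg_le_neg_iff]
      calc v = Real.sqrt (v ^ 2) := (Real.sqrt_sq (le_of_lt hv)).symm
        _ ≤ Real.sqrt (η ^ 2 + v ^ 2) := Real.sqrt_le_sqrt (by nlinarith [sq_nonneg η]))
    (by
      have : IntegrableOn (fun v => Real.exp (-1 * v)) (Set.Ioi (0 : ℝ)) :=
        exp_neg_integrableOn_Ioi 0 one_pos
      simpa [IntegrableOn] using this)
    (by
      filter_upwards [ae_restrict_mem measurableSet_Ioi] with v hv
      have hc : Tendsto (fun η : ℝ => Real.exp (-Real.sqrt (η ^ 2 + v ^ 2)))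
          (nhds 0) (nhds (Real.exp (-Real.sqrt (0 ^ 2 + v ^ 2)))) := by
        apply Continuous.tendsto
        continuity
      have hval : Real.exp (-Real.sqrt ((0 : ℝ) ^ 2 + v ^ 2)) = Real.exp (-v) := by
        rw [show (0 : ℝ) ^ 2 + v ^ 2 = v ^ 2 by ring, Real.sqrt_sq (le_of_lt hv)]
      rw [hval] at hc
      exact hc.mono_left nhdsWithin_le_nhds)
  rw [hint] at this
  exact this

/-- Pointwise convergence of the hyperbolic density with shape `η` and scale
`ρ² = η σ²` to the Laplace density with scale `σ` as `η → 0⁺`. -/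
theorem hyperbolic_tendsto_laplace (σ x : ℝ) (hσ : 0 < σ) :
    Tendsto
      (fun η : ℝ => (2 * Real.sqrt (η * (η * σ ^ 2)) * besselK 1 η)⁻¹
        * Real.exp (-Real.sqrt (η * (η + x ^ 2 / (η * σ ^ 2)))))
      (nhdsWithin 0 (Set.Ioi 0))
      (nhds ((2 * σ)⁻¹ * Real.exp (-|x| / σ))) := by
  have key : Tendsto
      (fun η : ℝ => (2 * σ * besselAuxF η)⁻¹
        * Real.exp (-Real.sqrt (η ^ 2 + x ^ 2 / σ ^ 2)))
      (nhdsWithin 0 (Set.Ioi 0))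
      (nhds ((2 * σ)⁻¹ * Real.exp (-|x| / σ))) := by
    have h1 : Tendsto (fun η : ℝ => (2 * σ * besselAuxF η)⁻¹)
        (nhdsWithin 0 (Set.Ioi 0)) (nhds ((2 * σ)⁻¹)) := by
      have := ((tendsto_const_nhds (x := (2 * σ : ℝ))).mul besselAuxF_tendsto).inv₀
        (by simp [hσ.ne'])
      simpa using this
    have h2 : Tendsto (fun η : ℝ => Real.exp (-Real.sqrt (η ^ 2 + x ^ 2 / σ ^ 2)))
        (nhdsWithin 0 (Set.Ioi 0)) (nhds (Real.exp (-|x| / σ))) := by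
      have hc : Tendsto (fun η : ℝ => Real.exp (-Real.sqrt (η ^ 2 + x ^ 2 / σ ^ 2)))
          (nhds 0) (nhds (Real.exp (-Real.sqrt ((0:ℝ) ^ 2 + x ^ 2 / σ ^ 2)))) := by
        apply Continuous.tendsto
        continuity
      have hval : Real.exp (-Real.sqrt ((0:ℝ) ^ 2 + x ^ 2 / σ ^ 2))
          = Real.exp (-|x| / σ) := by
        rw [show (0:ℝ) ^ 2 + x ^ 2 / σ ^ 2 = x ^ 2 / σ ^ 2 by ring,
          Real.sqrt_div (sq_nonneg x), Real.sqrt_sq_eq_abs, Real.sqrt_sq hσ.le, neg_div]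
      rw [hval] at hc
      exact hc.mono_left nhdsWithin_le_nhds
    exact h1.mul h2
  refine key.congr' ?_
  filter_upwards [self_mem_nhdsWithin] with η (hη : 0 < η)
  have hs : Real.sqrt (η * (η * σ ^ 2)) = η * σ := by
    rw [show η * (η * σ ^ 2) = (η * σ) ^ 2 by ring]
    exact Real.sqrt_sq (by positivity)
  have harg : η * (η + x ^ 2 / (η * σ ^ 2)) = η ^ 2 + x ^ 2 / σ ^ 2 := by
    field_simp
  rw [hs, harg, besselAuxF_eq η hη]
  congr 1
  rw [show 2 * (η * σ) * besselK 1 η = 2 * σ * (η * besselK 1 η) by ring]
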